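/- For every finite, simple, connected, undirected graph G and every positive integer K: if the concurrent cop number c̃(G) equals K, then the cop number satisfies c(G) ≤ K. -/

import Mathlib

open Finset Filter

noncomputable section

variable {V : Type*} [Fintype V] [DecidableEq V]

/-- The closed neighborhood `N[u]` of a vertex `u`: `u` together with its neighbors. -/
def nbhd (G : SimpleGraph V) [DecidableRel G.Adj] (u : V) : Finset V :=
  insert u (G.neighborFinset u)

lemma nbhd_nonempty (G : SimpleGraph V) [DecidableRel G.Adj] (u : V) :
    (nbhd G u).Nonempty :=
  ⟨u, Finset.mem_insert_self u _⟩

/-! ### The turn-based cops and robber game (TBCR) with `K` cops -/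

/-- A position of the `K`-cop game: the cops' locations and the robber's location. -/
abbrev PosK (V : Type*) (K : ℕ) := (Fin K → V) × V

/-- A (deterministic, history-dependent) cop strategy for TBCR: an initial placement
of the `K` cops, and a move function from histories of completed rounds. -/
abbrev TBCop (V : Type*) (K : ℕ) := (Fin K → V) × (List (PosK V K) → Fin K → V)

/-- A (deterministic, history-dependent) robber strategy for TBCR: an initial placement
(seeing the cops' placement), and a move function from histories of completed rounds
together with the cops' fresh move (the cop player moves first in each round). -/
abbrev TBRob (V : Type*) (K : ℕ) := ((Fin K → V) → V) × (List (PosK V K) → (Fin K → V) → V)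

/-- The history of completed rounds of TBCR after round `t`; each token must move within its
closed neighborhood (attempted illegal moves leave the token in place). -/
def tbPlay (G : SimpleGraph V) [DecidableRel G.Adj] {K : ℕ}
    (sc : TBCop V K) (sr : TBRob V K) : ℕ → List (PosK V K)
  | 0 => [(sc.1, sr.1 sc.1)]
  | (t+1) =>
    let h := tbPlay G sc sr t
    let p := h.getLast?.getD (sc.1, sr.1 sc.1)
    let c' : Fin K → V := fun i => if sc.2 h i ∈ nbhd G (p.1 i) then sc.2 h i else p.1 i
    let w := sr.2 h c'
    h ++ [(c', if w ∈ nbhd G p.2 then w else p.2)]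

/-- The position of the TBCR game at the end of round `t`. -/
def tbPos (G : SimpleGraph V) [DecidableRel G.Adj] {K : ℕ}
    (sc : TBCop V K) (sr : TBRob V K) (t : ℕ) : PosK V K :=
  (tbPlay G sc sr t).getLast?.getD (sc.1, sr.1 sc.1)

/-- The robber is captured in TBCR: at some time a cop occupies the robber's current
vertex (either at the end of a round, or just after the cops' half of a round). -/
def tbCaptured (G : SimpleGraph V) [DecidableRel G.Adj] {K : ℕ}
    (sc : TBCop V K) (sr : TBRob V K) : Prop :=
  ∃ t : ℕ, ∃ i : Fin K,
    (tbPos G sc sr t).1 i = (tbPos G sc sr t).2 ∨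
    (tbPos G sc sr (t+1)).1 i = (tbPos G sc sr t).2

/-- `K` cops suffice in the turn-based game: the cop player has a strategy guaranteeing
capture against every robber strategy. -/
def tbCopWin (G : SimpleGraph V) [DecidableRel G.Adj] (K : ℕ) : Prop :=
  ∃ sc : TBCop V K, ∀ sr : TBRob V K, tbCaptured G sc sr

/-- The cop number `c(G)`: the minimum `K` for which the cop player wins TBCR. -/
def copNumber (G : SimpleGraph V) [DecidableRel G.Adj] : ℕ :=
  sInf {K | tbCopWin G K}

/-! ### The concurrent cops and robber game (CCCR) with `K` cops -/

/-- A randomized cop strategy in CCCR: to each finite history it assigns a probability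
distribution over the cops' next moves. -/
abbrev CCCop (V : Type*) (K : ℕ) := List (PosK V K) → PMF (Fin K → V)

/-- A randomized robber strategy in CCCR. -/
abbrev CCRob (V : Type*) (K : ℕ) := List (PosK V K) → PMF V

/-- A strategy is memoryless if the distribution it assigns depends only on the
current (i.e. most recent) position. -/
def MemorylessK {K : ℕ} (π : List (PosK V K) → PMF (Fin K → V)) : Prop :=
  ∀ h₁ h₂ : List (PosK V K), h₁.getLast? = h₂.getLast? → π h₁ = π h₂

/-- The CCCR transition function for `K` cops: both players move simultaneously, each
token within its closed neighborhood (illegal moves are ignored); a capture position is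
absorbing; if a cop and the robber swap adjacent vertices, the robber is captured
\"en passant\". -/
def ccStep (G : SimpleGraph V) [DecidableRel G.Adj] {K : ℕ}
    (p : PosK V K) (u : Fin K → V) (w : V) : PosK V K :=
  if ∃ i, p.1 i = p.2 then p
  else
    let u' : Fin K → V := fun i => if u i ∈ nbhd G (p.1 i) then u i else p.1 i
    let w' : V := if w ∈ nbhd G p.2 then w else p.2
    if ∃ i, u' i = p.2 ∧ w' = p.1 i then (u', p.2) else (u', w')

/-- The distribution over histories of the first `t+1` positions of CCCR, induced by a
pair of randomized strategies and an initial position. -/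
def ccPlay (G : SimpleGraph V) [DecidableRel G.Adj] {K : ℕ}
    (πC : CCCop V K) (πR : CCRob V K) (init : PosK V K) : ℕ → PMF (List (PosK V K))
  | 0 => PMF.pure [init]
  | (t+1) => (ccPlay G πC πR init t).bind fun h =>
      (πC h).bind fun u => (πR h).bind fun w =>
        PMF.pure (h ++ [ccStep G (h.getLast?.getD init) u w])

/-- The probability that the robber is still free (not captured) after round `t`. -/
def ccFreeProb (G : SimpleGraph V) [DecidableRel G.Adj] {K : ℕ}
    (πC : CCCop V K) (πR : CCRob V K) (init : PosK V K) (t : ℕ) : ENNReal :=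
  (ccPlay G πC πR init t).toOuterMeasure
    {h | ∀ i, (h.getLast?.getD init).1 i ≠ (h.getLast?.getD init).2}

/-- `K` cops suffice in the concurrent game: the cop player has a strategy ensuring
that, from every initial position and against every robber strategy, capture occurs
with probability one (the set of infinite histories avoiding capture has probability
zero). -/
def ccCopWin (G : SimpleGraph V) [DecidableRel G.Adj] (K : ℕ) : Prop :=
  ∃ πC : CCCop V K, ∀ init : PosK V K, ∀ πR : CCRob V K,
    (⨅ t : ℕ, ccFreeProb G πC πR init t) = 0

/-- The concurrent cop number `c̃(G)`. -/
def ccopNumber (G : SimpleGraph V) [DecidableRel G.Adj] : ℕ :=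
  sInf {K | ccCopWin G K}


/-! ### Auxiliary development -/

open Classical in
/-- The cop attractor hierarchy for the turn-based game with capture radius one. -/
def CAcc (G : SimpleGraph V) [DecidableRel G.Adj] (K : ℕ) : ℕ → Set (PosK V K)
  | 0 => {p | ∃ i, p.2 ∈ nbhd G (p.1 i)}
  | (n+1) => CAcc G K n ∪ {p | ∃ C : Fin K → V, (∀ i, C i ∈ nbhd G (p.1 i)) ∧
      ∀ r ∈ nbhd G p.2, (C, r) ∈ CAcc G K n}

lemma Acc_mono (G : SimpleGraph V) [DecidableRel G.Adj] (K : ℕ) :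
    Monotone (CAcc G K) := by
  apply monotone_nat_of_le_succ
  intro n
  exact Set.subset_union_left

lemma self_mem_nbhd (G : SimpleGraph V) [DecidableRel G.Adj] (u : V) : u ∈ nbhd G u :=
  Finset.mem_insert_self u _

/-- From a position outside every `CAcc n`, the robber outside the cops' closed
neighborhoods. -/
lemma B_dist (G : SimpleGraph V) [DecidableRel G.Adj] {K : ℕ} {p : PosK V K}
    (hp : ∀ n, p ∉ CAcc G K n) : ∀ i, p.2 ∉ nbhd G (p.1 i) := by
  intro i hi
  exact hp 0 ⟨i, hi⟩

/-- From a position outside every `CAcc n`, for every legal cop move there is a legal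
robber response staying outside every `CAcc n`. -/
lemma B_resp (G : SimpleGraph V) [DecidableRel G.Adj] {K : ℕ} {p : PosK V K}
    (hp : ∀ n, p ∉ CAcc G K n) (u : Fin K → V) (hu : ∀ i, u i ∈ nbhd G (p.1 i)) :
    ∃ w, w ∈ nbhd G p.2 ∧ ∀ n, (u, w) ∉ CAcc G K n := by
  by_contra hcon
  push_neg at hcon
  have hch : ∀ w : V, ∃ n, w ∈ nbhd G p.2 → (u, w) ∈ CAcc G K n := by
    intro w
    by_cases hw : w ∈ nbhd G p.2
    · obtain ⟨n, hn⟩ := hcon w hw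
      exact ⟨n, fun _ => hn⟩
    · exact ⟨0, fun h => absurd h hw⟩
  choose g hg using hch
  refine hp ((nbhd G p.2).sup g + 1) (Or.inr ⟨u, hu, fun r hr => ?_⟩)
  exact Acc_mono G K (Finset.le_sup hr) (hg r hr)

/-! ### Turn-based game basics -/

lemma tbPlay_ne_nil (G : SimpleGraph V) [DecidableRel G.Adj] {K : ℕ}
    (sc : TBCop V K) (sr : TBRob V K) (t : ℕ) : tbPlay G sc sr t ≠ [] := by
  cases t with
  | zero => simp [tbPlay]
  | succ t => simp [tbPlay]

lemma tbPlay_getLast (G : SimpleGraph V) [DecidableRel G.Adj] {K : ℕ}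
    (sc : TBCop V K) (sr : TBRob V K) (t : ℕ) :
    (tbPlay G sc sr t).getLast? = some (tbPos G sc sr t) := by
  cases e : (tbPlay G sc sr t).getLast? with
  | none => exact absurd (List.getLast?_eq_none_iff.mp e) (tbPlay_ne_nil G sc sr t)
  | some x => simp [tbPos, e]

lemma tbPos_succ (G : SimpleGraph V) [DecidableRel G.Adj] {K : ℕ}
    (sc : TBCop V K) (sr : TBRob V K) (t : ℕ) :
    tbPos G sc sr (t+1) =
      (fun i => if sc.2 (tbPlay G sc sr t) i ∈ nbhd G ((tbPos G sc sr t).1 i)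
          then sc.2 (tbPlay G sc sr t) i else (tbPos G sc sr t).1 i,
       if sr.2 (tbPlay G sc sr t)
            (fun i => if sc.2 (tbPlay G sc sr t) i ∈ nbhd G ((tbPos G sc sr t).1 i)
              then sc.2 (tbPlay G sc sr t) i else (tbPos G sc sr t).1 i)
          ∈ nbhd G (tbPos G sc sr t).2
        then sr.2 (tbPlay G sc sr t)
            (fun i => if sc.2 (tbPlay G sc sr t) i ∈ nbhd G ((tbPos G sc sr t).1 i)
              then sc.2 (tbPlay G sc sr t) i else (tbPos G sc sr t).1 i)
        else (tbPos G sc sr t).2) := by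
  conv_lhs => rw [tbPos, tbPlay]
  simp only [tbPos]
  simp
  exact ⟨rfl, rfl⟩

/-! ### The cop strategy when every position is in the attractor -/

open Classical in
/-- From a position not in `CAcc 0`, with minimal rank, extract the cop move witness. -/
lemma copMove_exists (G : SimpleGraph V) [DecidableRel G.Adj] {K : ℕ}
    (hall : ∀ p : PosK V K, ∃ n, p ∈ CAcc G K n) (p : PosK V K)
    (hp : p ∉ CAcc G K 0) :
    ∃ C : Fin K → V, (∀ i, C i ∈ nbhd G (p.1 i)) ∧
      ∀ r ∈ nbhd G p.2, (C, r) ∈ CAcc G K (Nat.find (hall p) - 1) := by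
  have hmem : p ∈ CAcc G K (Nat.find (hall p)) := Nat.find_spec (hall p)
  have hne : Nat.find (hall p) ≠ 0 := by
    intro e
    rw [e] at hmem
    exact hp hmem
  obtain ⟨m, hm⟩ : ∃ m, Nat.find (hall p) = m + 1 :=
    ⟨Nat.find (hall p) - 1, by omega⟩
  have hmin : p ∉ CAcc G K m := Nat.find_min (hall p) (by omega)
  rw [hm] at hmem
  cases hmem with
  | inl hl => exact absurd hl hmin
  | inr hr =>
    obtain ⟨C, hC1, hC2⟩ := hr
    exact ⟨C, hC1, by rw [hm]; simpa using hC2⟩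

open Classical in
/-- The cop move function: capture if possible, otherwise decrease the rank. -/
noncomputable def copMove (G : SimpleGraph V) [DecidableRel G.Adj] {K : ℕ}
    (hall : ∀ p : PosK V K, ∃ n, p ∈ CAcc G K n) (p : PosK V K) : Fin K → V :=
  if h0 : p ∈ CAcc G K 0 then (fun i => if p.2 ∈ nbhd G (p.1 i) then p.2 else p.1 i)
  else (copMove_exists G hall p h0).choose

open Classical in
lemma tbCopWin_of_all (G : SimpleGraph V) [DecidableRel G.Adj] (K : ℕ)
    (hV : Nonempty V)
    (hall : ∀ p : PosK V K, ∃ n, p ∈ CAcc G K n) : tbCopWin G K := by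
  obtain ⟨v0⟩ := hV
  set sc : TBCop V K :=
    ((fun _ => v0), fun h => copMove G hall (h.getLast?.getD ((fun _ => v0), v0))) with hsc
  have hmove : ∀ (sr : TBRob V K) (t : ℕ),
      sc.2 (tbPlay G sc sr t) = copMove G hall (tbPos G sc sr t) := by
    intro sr t
    show copMove G hall ((tbPlay G sc sr t).getLast?.getD ((fun _ => v0), v0)) = _
    rw [tbPlay_getLast G sc sr t]
    rfl
  refine ⟨sc, ?_⟩
  have key : ∀ n (sr : TBRob V K) (t : ℕ),
      tbPos G sc sr t ∈ CAcc G K n → tbCaptured G sc sr := by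
    intro n
    induction n with
    | zero =>
      intro sr t hmem
      obtain ⟨i, hi⟩ := hmem
      refine ⟨t, i, Or.inr ?_⟩
      rw [tbPos_succ]
      have h0 : tbPos G sc sr t ∈ CAcc G K 0 := ⟨i, hi⟩
      rw [hmove sr t]
      simp [copMove, h0, hi]
    | succ n ih =>
      intro sr t hmem
      by_cases hA : tbPos G sc sr t ∈ CAcc G K n
      · exact ih sr t hA
      have h0 : tbPos G sc sr t ∉ CAcc G K 0 := fun h =>
        hA (Acc_mono G K (Nat.zero_le n) h)
      have hrank : Nat.find (hall (tbPos G sc sr t)) - 1 = n := by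
        have hle : Nat.find (hall (tbPos G sc sr t)) ≤ n + 1 :=
          Nat.find_min' _ hmem
        have hgt : n < Nat.find (hall (tbPos G sc sr t)) := by
          by_contra hcon
          push_neg at hcon
          exact hA (Acc_mono G K hcon (Nat.find_spec (hall (tbPos G sc sr t))))
        omega
      have hspec := (copMove_exists G hall (tbPos G sc sr t) h0).choose_spec
      have hcm : copMove G hall (tbPos G sc sr t) =
          (copMove_exists G hall (tbPos G sc sr t) h0).choose := by
        simp [copMove, h0]
      refine ih sr (t+1) ?_
      rw [tbPos_succ, hmove sr t, hcm]
      have hclamp : (fun i => if (copMove_exists G hall (tbPos G sc sr t) h0).choose i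
          ∈ nbhd G ((tbPos G sc sr t).1 i)
          then (copMove_exists G hall (tbPos G sc sr t) h0).choose i
          else (tbPos G sc sr t).1 i) =
          (copMove_exists G hall (tbPos G sc sr t) h0).choose := by
        funext i
        simp [hspec.1 i]
      rw [hclamp]
      by_cases hw : sr.2 (tbPlay G sc sr t)
          ((copMove_exists G hall (tbPos G sc sr t) h0).choose)
          ∈ nbhd G (tbPos G sc sr t).2
      · rw [if_pos hw]
        exact Acc_mono G K (le_of_eq hrank) (hspec.2 _ hw)
      · rw [if_neg hw]
        exact Acc_mono G K (le_of_eq hrank) (hspec.2 _ (self_mem_nbhd G _))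
  intro sr
  obtain ⟨n, hn⟩ := hall (tbPos G sc sr 0)
  exact key n sr 0 hn

/-! ### The robber strategy in the concurrent game -/

/-- Invariant maintained by the robber: the cops' positions are reachable in one step
from some tuple `C` such that `(C, robber)` lies outside every `CAcc n`. -/
def RInv (G : SimpleGraph V) [DecidableRel G.Adj] {K : ℕ} (q : PosK V K) : Prop :=
  ∃ C : Fin K → V, (∀ i, q.1 i ∈ nbhd G (C i)) ∧ ∀ n, (C, q.2) ∉ CAcc G K n

open Classical in
/-- The robber's move. -/
noncomputable def rMove (G : SimpleGraph V) [DecidableRel G.Adj] {K : ℕ}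
    (q : PosK V K) : V :=
  if hq : ∃ w, w ∈ nbhd G q.2 ∧ ∀ n, (q.1, w) ∉ CAcc G K n then hq.choose else q.2

lemma RInv_noncapture (G : SimpleGraph V) [DecidableRel G.Adj] {K : ℕ}
    {q : PosK V K} (hq : RInv G q) : ∀ i, q.1 i ≠ q.2 := by
  obtain ⟨C, hC1, hC2⟩ := hq
  intro i he
  exact B_dist G hC2 i (he ▸ hC1 i)

open Classical in
lemma RInv_step (G : SimpleGraph V) [DecidableRel G.Adj] {K : ℕ}
    {q : PosK V K} (hq : RInv G q) (u : Fin K → V) :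
    RInv G (ccStep G q u (rMove G q)) := by
  obtain ⟨C, hC1, hC2⟩ := hq
  have hex : ∃ w, w ∈ nbhd G q.2 ∧ ∀ n, (q.1, w) ∉ CAcc G K n :=
    B_resp G hC2 q.1 hC1
  have hrm : rMove G q = hex.choose := dif_pos hex
  obtain ⟨hw1, hw2⟩ := hex.choose_spec
  have hnc : ¬ ∃ i, q.1 i = q.2 := by
    push_neg
    exact RInv_noncapture G ⟨C, hC1, hC2⟩
  have hwnot : ∀ i, hex.choose ∉ nbhd G (q.1 i) := B_dist G hw2
  rw [ccStep, if_neg hnc]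
  simp only [hrm, if_pos hw1]
  rw [if_neg]
  ·
    exact ⟨q.1, fun i => by dsimp only; split <;> [exact ‹_›; exact self_mem_nbhd G _], hw2⟩
  · rintro ⟨i, _, hswap⟩
    exact hwnot i (hswap ▸ self_mem_nbhd G (q.1 i))

open Classical in
lemma not_ccCopWin_of_escape (G : SimpleGraph V) [DecidableRel G.Adj] (K : ℕ)
    (p0 : PosK V K) (hp0 : ∀ n, p0 ∉ CAcc G K n) : ¬ ccCopWin G K := by
  rintro ⟨πC, hπC⟩
  set πR : CCRob V K := fun h => PMF.pure (rMove G (h.getLast?.getD p0)) with hπR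
  have hsupp : ∀ t, ∀ h ∈ (ccPlay G πC πR p0 t).support,
      RInv G (h.getLast?.getD p0) := by
    intro t
    induction t with
    | zero =>
      intro h hh
      rw [ccPlay, PMF.support_pure] at hh
      subst hh
      simp only [List.getLast?, Option.getD_some]
      exact ⟨p0.1, fun i => self_mem_nbhd G _, hp0⟩
    | succ t ih =>
      intro h hh
      rw [ccPlay] at hh
      simp only [PMF.support_bind, Set.mem_iUnion] at hh
      obtain ⟨h', hh', u, hu, w, hw, hmem⟩ := hh
      rw [hπR, PMF.support_pure, Set.mem_singleton_iff] at hw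
      rw [PMF.support_pure, Set.mem_singleton_iff] at hmem
      subst hmem
      subst hw
      have : (h' ++ [ccStep G (h'.getLast?.getD p0) u
          (rMove G (h'.getLast?.getD p0))]).getLast?.getD p0 =
          ccStep G (h'.getLast?.getD p0) u (rMove G (h'.getLast?.getD p0)) := by
        simp
      rw [this]
      exact RInv_step G (ih h' hh') u
  have hfree : ∀ t, ccFreeProb G πC πR p0 t = 1 := by
    intro t
    rw [ccFreeProb, PMF.toOuterMeasure_apply_eq_one_iff]
    intro h hh
    exact RInv_noncapture G (hsupp t h hh)
  have := hπC p0 πR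
  simp only [hfree, iInf_const] at this
  exact one_ne_zero this

/-- if the concurrent cop number `c̃(G)` equals `K > 0` then the cop
number satisfies `c(G) ≤ K`. -/
theorem copNumber_le_of_ccopNumber_eq (G : SimpleGraph V) [DecidableRel G.Adj]
    (hconn : G.Connected) (K : ℕ) (hK : 0 < K) (h : ccopNumber G = K) :
    copNumber G ≤ K := by
  have hne : {K | ccCopWin G K}.Nonempty := by
    by_contra hcon
    rw [Set.not_nonempty_iff_eq_empty] at hcon
    rw [ccopNumber, hcon, Nat.sInf_empty] at h
    omega
  have hcc : ccCopWin G K := by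
    have := Nat.sInf_mem hne
    rwa [show sInf {K | ccCopWin G K} = K from h] at this
  by_cases hall : ∀ p : PosK V K, ∃ n, p ∈ CAcc G K n
  · exact Nat.sInf_le (tbCopWin_of_all G K hconn.nonempty hall)
  · push_neg at hall
    obtain ⟨p0, hp0⟩ := hall
    exact absurd hcc (not_ccCopWin_of_escape G K p0 hp0)
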